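/- Let E be a nonzero real Banach space and A ⊆ E × E* a nonempty quasidense subset. Define Θ_A : E* × E** → ]−∞,∞] by Θ_A(y*,y**) := sup_{(s,s*)∈A}[⟨s,y*⟩ + ⟨s*,y**⟩ − ⟨s,s*⟩]. Then Θ_A(y*,y**) ≥ ⟨y*,y**⟩ for all (y*,y**) ∈ E* × E**. -/

import Mathlib

theorem stmt14 {E : Type*} [NormedAddCommGroup E] [NormedSpace ℝ E] [CompleteSpace E]
    [Nontrivial E]
    (A : Set (E × StrongDual ℝ E)) (hne : A.Nonempty)
    (hqd : ∀ c : E × StrongDual ℝ E,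
      (⨅ a ∈ A, ((‖a.1 - c.1‖ ^ 2 / 2 + ‖a.2 - c.2‖ ^ 2 / 2
        + (a.2 - c.2) (a.1 - c.1) : ℝ) : EReal)) ≤ 0)
    (y' : StrongDual ℝ E) (y'' : StrongDual ℝ (StrongDual ℝ E)) :
    ((y'' y' : ℝ) : EReal) ≤
      ⨆ p ∈ A, ((y' p.1 + y'' p.2 - p.2 p.1 : ℝ) : EReal) := by
  have key : ∀ ε : ℝ, 0 < ε → ∃ p ∈ A,
      y'' y' - ε ≤ y' p.1 + y'' p.2 - p.2 p.1 := by
    intro ε hε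
    set N := ‖y''‖ with hNdef
    have hN0 : 0 ≤ N := norm_nonneg y''
    set δ := ε / (2 * (N + 1)) with hδdef
    have hδpos : 0 < δ := by positivity
    have hNδ : N * δ ≤ ε / 2 := by
      have h1 : (N + 1) * δ = ε / 2 := by
        rw [hδdef]; field_simp
      nlinarith
    -- near-norming functional
    obtain ⟨u₀, hu1, hu2⟩ : ∃ u₀ : StrongDual ℝ E, ‖u₀‖ ≤ 1 ∧ N - δ ≤ y'' u₀ := by
      have hlt : N - δ < ‖y''‖ := by rw [← hNdef]; linarith
      obtain ⟨u, hu, hval⟩ := ContinuousLinearMap.exists_lt_apply_of_lt_opNorm y'' hlt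
      rcases le_or_gt 0 (y'' u) with h | h
      · refine ⟨u, hu.le, ?_⟩
        have : ‖y'' u‖ = y'' u := by rw [Real.norm_eq_abs, abs_of_nonneg h]
        linarith [hval.le.trans_eq this]
      · refine ⟨-u, by simpa using hu.le, ?_⟩
        have h2 : y'' (-u) = -(y'' u) := map_neg _ _
        have : ‖y'' u‖ = -(y'' u) := by rw [Real.norm_eq_abs, abs_of_neg h]
        rw [h2]; linarith [hval.le.trans_eq this]
    set x' := y' + N • u₀ with hx'def
    -- quasidensity at (0, x')
    obtain ⟨a, haA, hval⟩ : ∃ a ∈ A,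
        (‖a.1 - (0:E)‖ ^ 2 / 2 + ‖a.2 - x'‖ ^ 2 / 2 + (a.2 - x') (a.1 - 0) : ℝ) < ε / 2 := by
      by_contra hc
      push_neg at hc
      have hle : ((ε / 2 : ℝ) : EReal) ≤
          ⨅ a ∈ A, ((‖a.1 - (0:E)‖ ^ 2 / 2 + ‖a.2 - x'‖ ^ 2 / 2
            + (a.2 - x') (a.1 - 0) : ℝ) : EReal) :=
        le_iInf₂ fun a ha => EReal.coe_le_coe_iff.mpr (hc a ha)
      have := hle.trans (hqd (0, x'))
      have h0 : ((ε / 2 : ℝ) : EReal) ≤ ((0 : ℝ) : EReal) := by simpa using this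
      have := EReal.coe_le_coe_iff.mp h0
      linarith
    obtain ⟨s, s'⟩ := a
    refine ⟨(s, s'), haA, ?_⟩
    simp only [sub_zero] at hval
    have hss : (s' - x') s = s' s - x' s := by
      simp [ContinuousLinearMap.sub_apply]
    have hx's : x' s = y' s + N * u₀ s := by
      simp [hx'def, ContinuousLinearMap.add_apply, ContinuousLinearMap.smul_apply]
    have hy''x' : y'' x' = y'' y' + N * y'' u₀ := by
      rw [hx'def, map_add, map_smul]; simp
    have hy''s' : y'' s' = y'' x' + y'' (s' - x') := by
      rw [← map_add]; congr 1; abel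
    have hb : -(N * ‖s' - x'‖) ≤ y'' (s' - x') := by
      have h1 : ‖y'' (s' - x')‖ ≤ N * ‖s' - x'‖ := y''.le_opNorm _
      have h2 : |y'' (s' - x')| ≤ N * ‖s' - x'‖ := by rwa [← Real.norm_eq_abs]
      linarith [neg_abs_le (y'' (s' - x')), h2]
    have hu0s : u₀ s ≤ ‖s‖ := by
      have h1 : ‖u₀ s‖ ≤ ‖u₀‖ * ‖s‖ := u₀.le_opNorm _
      have h2 : ‖u₀‖ * ‖s‖ ≤ 1 * ‖s‖ := by
        apply mul_le_mul_of_nonneg_right hu1 (norm_nonneg _)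
      have h3 : u₀ s ≤ ‖u₀ s‖ := le_abs_self _
      linarith
    have hNu0s : N * u₀ s ≤ N * ‖s‖ := mul_le_mul_of_nonneg_left hu0s hN0
    have hNu2 : N * (N - δ) ≤ N * y'' u₀ := mul_le_mul_of_nonneg_left hu2 hN0
    simp only []
    nlinarith [sq_nonneg (‖s‖ - N), sq_nonneg (‖s' - x'‖ - N), hval, hss, hx's,
      hy''x', hy''s', hb, hNu0s, hNu2, hNδ]
  -- pass to EReal
  by_contra hcon
  push_neg at hcon
  obtain ⟨z, hz1, hz2⟩ := exists_between hcon
  have hzbot : z ≠ ⊥ := (bot_le.trans_lt hz1).ne'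
  have hztop : z ≠ ⊤ := (hz2.trans_le le_top).ne
  set zr := z.toReal with hzrdef
  have hzr : (zr : EReal) = z := EReal.coe_toReal hztop hzbot
  have hεpos : 0 < y'' y' - zr := by
    have h : (zr : EReal) < ((y'' y' : ℝ) : EReal) := hzr ▸ hz2
    have := EReal.coe_lt_coe_iff.mp h
    linarith
  obtain ⟨p, hp, hineq⟩ := key _ hεpos
  have hzr_le : zr ≤ y' p.1 + y'' p.2 - p.2 p.1 := by linarith
  have hS : z ≤ ⨆ p ∈ A, ((y' p.1 + y'' p.2 - p.2 p.1 : ℝ) : EReal) := by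
    rw [← hzr]
    exact le_trans (EReal.coe_le_coe_iff.mpr hzr_le)
      (le_iSup₂ (f := fun p (_ : p ∈ A) => ((y' p.1 + y'' p.2 - p.2 p.1 : ℝ) : EReal)) p hp)
  exact absurd hS (not_le.mpr hz1)
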